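/- For fixed γ1 ∈ [0, π/2] and fixed x3 ∈ (−1, 0), the function γ2 ↦ g(x3, γ1, γ2) (given by the piecewise formula of Eq. (gm1)) is monotonically non-increasing on [0, min(γ1, π/2 − γ1)]; for fixed x3 ∈ (0, 1) it is monotonically non-decreasing in γ2 on the same interval. -/

import Mathlib

open Real

/-- Boundary point x3^(3) of Eq. (interval2). -/
noncomputable def x33 (γ1 γ2 : ℝ) : ℝ :=
  (-Real.sin γ1 * (Real.sin γ1 +
      (Real.cos γ1 * Real.cos γ2 + (Real.sin γ1)^2) * Real.sin γ2)) /
    (1 + Real.cos γ1 * (Real.cos γ2 -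
      Real.sin γ2 * (Real.cos γ1 * Real.sin γ2 + (Real.sin γ1)^2 * Real.tan γ2)))

/-- Boundary point x3^(4) of Eq. (interval2). -/
noncomputable def x34 (γ1 γ2 : ℝ) : ℝ :=
  (-Real.sin γ1 * (-Real.sin γ1 +
      (Real.cos γ1 * Real.cos γ2 + (Real.sin γ1)^2) * Real.sin γ2)) /
    (1 + Real.cos γ1 * (Real.cos γ2 -
      Real.sin γ2 * (Real.cos γ1 * Real.sin γ2 + (Real.sin γ1)^2 * Real.tan γ2)))

/-- The piecewise geometric-measure function `g(x3, γ1, γ2)` of Eq. (gm1). -/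
noncomputable def gGM (γ1 γ2 x3 : ℝ) : ℝ :=
  if x3 ≤ x33 γ1 γ2 then (1 - x3) * (1 + Real.cos (γ1 + γ2)) / 4
  else if x3 < x34 γ1 γ2 then
    (1 - x3^2) * Real.sin γ1 * Real.cos γ2 *
        (Real.cos γ2 * Real.sin γ1 - x3 * Real.cos γ1 * Real.sin γ2) /
      (-2 * (x3^2 - (Real.cos γ2 * Real.sin γ1 - x3 * Real.cos γ1 * Real.sin γ2)^2))
  else (1 + x3) * (1 + Real.cos (γ1 - γ2)) / 4

set_option maxHeartbeats 2000000

section Auxiliary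

lemma lem_key {c1 p q r t : ℝ} (h2 : p^2+q^2 = 1) (h3 : r^2+t^2 = 1)
    (hp0 : 0 ≤ p) (ht0 : 0 ≤ t) (hpr : p ≤ r) (htq : t ≤ q) (hrc : r ≤ c1) :
    q - t ≤ c1 * (r*q - p*t) := by
  have hq0 : 0 ≤ q := le_trans ht0 htq
  have hrq : 0 ≤ r*q - p*t := by nlinarith
  have h1 : 0 ≤ 1 - r*p - q*t := by nlinarith [sq_nonneg (r-p), sq_nonneg (q-t)]
  have hA : 0 ≤ (c1 - r) * (r*q - p*t) := mul_nonneg (by linarith) hrq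
  have hB : 0 ≤ t * (1 - r*p - q*t) := mul_nonneg ht0 h1
  nlinarith [hA, hB, h3]

lemma lem_D2 {s1 c1 p q : ℝ} (h1 : s1^2+c1^2 = 1) (hs1 : 0 < s1) (hc1 : 0 ≤ c1)
    (hq : 0 < q) (hp0 : 0 ≤ p) (hpc : p ≤ c1) (hpq : p ≤ q) :
    0 < q + c1*q^2 - c1*p^2*(c1*q + s1^2) := by
  have hp2 : p^2 ≤ c1^2 := by nlinarith
  have e1 : c1*p^2*s1^2 ≤ c1^2*p*s1^2 := by
    nlinarith [mul_nonneg (mul_nonneg hc1 hp0) (sq_nonneg s1)]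
  have e2 : c1^2*p*s1^2 ≤ c1^2*q*s1^2 := by
    nlinarith [mul_nonneg (mul_nonneg hc1 hc1) (sq_nonneg s1)]
  have e3 : c1^2*p^2*q ≤ c1^2*c1^2*q := by
    nlinarith [mul_nonneg (mul_nonneg hc1 hc1) hq.le]
  have e6 : c1^2*c1^2*q + c1^2*q*s1^2 = c1^2*q := by linear_combination (c1^2*q) * h1
  have e5 : 0 < q*s1^2 + c1*q^2 := by positivity
  nlinarith [e1, e2, e3]

lemma lem_uplus {s1 c1 p q x : ℝ} (h1 : s1^2+c1^2 = 1) (h2 : p^2+q^2 = 1)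
    (hs1 : 0 < s1) (hc1 : 0 < c1) (hq : 0 < q) (hp0 : 0 ≤ p)
    (hpc : p ≤ c1) (hpq : p ≤ q) (hqs : s1 ≤ q)
    (hx1 : -1 < x)
    (hP : 0 ≤ x*(q + c1*q^2 - c1*p^2*(c1*q + s1^2)) + s1*q*(s1 + (c1*q + s1^2)*p)) :
    0 < q*s1 - x*c1*p + x := by
  rcases eq_or_lt_of_le hpc with hpe | hplt
  · subst hpe
    have hqs1 : q = s1 := by nlinarith
    subst hqs1
    nlinarith [mul_pos (mul_pos hq hq) (show (0:ℝ) < 1+x by linarith)]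
  · have hD2 := lem_D2 h1 hs1 hc1.le hq hp0 hplt.le hpq
    have hq1 : q ≤ 1 := by nlinarith
    have hcp : c1*p < 1 := by nlinarith
    have hdelta : 0 < (q-s1)*(1-p*c1) + c1*(q^2-s1^2) + s1^2*(c1-p) := by
      have t1 : 0 ≤ (q-s1)*(1-p*c1) := mul_nonneg (by linarith) (by nlinarith)
      have t2 : 0 ≤ c1*(q^2-s1^2) := mul_nonneg hc1.le (by nlinarith)
      have t3 : 0 < s1^2*(c1-p) := mul_pos (by positivity) (by linarith)
      linarith
    have hnum : 0 < s1*q*((q-s1)*(1-p*c1) + c1*(q^2-s1^2) + s1^2*(c1-p))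
          + (x*(q + c1*q^2 - c1*p^2*(c1*q + s1^2)) + s1*q*(s1 + (c1*q + s1^2)*p))*(1-c1*p) := by
      have u1 := mul_pos (mul_pos hs1 hq) hdelta
      have u2 := mul_nonneg hP (by linarith : (0:ℝ) ≤ 1 - c1*p)
      nlinarith
    by_contra hcon
    push_neg at hcon
    nlinarith [mul_nonpos_of_nonneg_of_nonpos hD2.le hcon]

lemma lem_uminus {s1 c1 p q x : ℝ} (h1 : s1^2+c1^2 = 1)
    (hs1 : 0 < s1) (hc1 : 0 < c1) (hq : 0 < q) (hp0 : 0 ≤ p)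
    (hpc : p ≤ c1) (hpq : p ≤ q) (hqs : s1 ≤ q)
    (hQ : x*(q + c1*q^2 - c1*p^2*(c1*q + s1^2)) + s1*q*(-s1 + (c1*q + s1^2)*p) ≤ 0) :
    0 < q*s1 - x*c1*p - x := by
  have hD2 := lem_D2 h1 hs1 hc1.le hq hp0 hpc hpq
  have hdelta : 0 < (q-s1) + c1*q^2 + p*s1^2 + (p*(c1*q + s1^2 - s1*c1) - p*s1^2) := by
    have t2 : 0 < c1*q^2 := by positivity
    have t3 : 0 ≤ p*(c1*q + s1^2 - s1*c1) - p*s1^2 := by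
      nlinarith [mul_nonneg (mul_nonneg hp0 hc1.le) (by linarith : (0:ℝ) ≤ q - s1)]
    have t4 : 0 ≤ p*s1^2 := by positivity
    linarith
  have hnum : 0 < s1*q*((q-s1) + c1*q^2 + p*s1^2 + (p*(c1*q + s1^2 - s1*c1) - p*s1^2))
        - (x*(q + c1*q^2 - c1*p^2*(c1*q + s1^2)) + s1*q*(-s1 + (c1*q + s1^2)*p))*(1+c1*p) := by
    have h5 := mul_pos (mul_pos hs1 hq) hdelta
    have h6 : 0 ≤ -((x*(q + c1*q^2 - c1*p^2*(c1*q + s1^2))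
        + s1*q*(-s1 + (c1*q + s1^2)*p))*(1+c1*p)) := by
      have hp1 : (0:ℝ) ≤ 1 + c1*p := by positivity
      nlinarith
    linarith
  by_contra hcon
  push_neg at hcon
  nlinarith [mul_nonpos_of_nonneg_of_nonpos hD2.le hcon]

lemma lem_Qneg {s1 c1 p q x : ℝ} (h1 : s1^2+c1^2 = 1) (h2 : p^2+q^2 = 1)
    (hs1 : 0 ≤ s1) (hc1 : 0 ≤ c1) (hq : 0 ≤ q) (hp0 : 0 ≤ p) (hps : p ≤ s1)
    (hx : x < 0) (hD2 : 0 < q + c1*q^2 - c1*p^2*(c1*q + s1^2)) :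
    x*(q + c1*q^2 - c1*p^2*(c1*q + s1^2)) + s1*q*(-s1 + (c1*q + s1^2)*p) < 0 := by
  have hcq : c1*q ≤ 1 - s1*p := by nlinarith [sq_nonneg (s1-p), sq_nonneg (c1-q)]
  have hsp : s1*p ≤ 1 := by nlinarith
  have hKp : (c1*q + s1^2)*p ≤ s1 := by
    nlinarith [mul_nonneg hp0 (by linarith : (0:ℝ) ≤ 1 - s1*p)]
  have h5 : s1*q*(-s1 + (c1*q + s1^2)*p) ≤ 0 := by
    have h6 : -s1 + (c1*q + s1^2)*p ≤ 0 := by linarith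
    exact mul_nonpos_of_nonneg_of_nonpos (mul_nonneg hs1 hq) h6
  nlinarith [mul_neg_of_neg_of_pos hx hD2]

lemma lem_Ppos {s1 c1 p q x : ℝ}
    (hs1 : 0 ≤ s1) (hc1 : 0 ≤ c1) (hq : 0 ≤ q) (hp0 : 0 ≤ p)
    (hx : 0 < x) (hD2 : 0 < q + c1*q^2 - c1*p^2*(c1*q + s1^2)) :
    0 < x*(q + c1*q^2 - c1*p^2*(c1*q + s1^2)) + s1*q*(s1 + (c1*q + s1^2)*p) := by
  have h7 : 0 ≤ s1*q*(s1 + (c1*q + s1^2)*p) := by positivity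
  nlinarith [mul_pos hx hD2]

lemma lem_E1 {s1 c1 p q x : ℝ} (h1 : s1^2+c1^2 = 1) (h2 : p^2+q^2 = 1)
    (hD2 : q + c1*q^2 - c1*p^2*(c1*q + s1^2) ≠ 0) (hq : q ≠ 0)
    (hP : x*(q + c1*q^2 - c1*p^2*(c1*q + s1^2)) + s1*q*(s1 + (c1*q + s1^2)*p) = 0) :
    (1 + (c1*q - s1*p))*((q*s1 - x*c1*p)^2 - x^2) - 2*(1+x)*(s1*q)*(q*s1 - x*c1*p) = 0 := by
  have key : ((q + c1*q^2 - c1*p^2*(c1*q + s1^2))*q) *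
      ((1 + (c1*q - s1*p))*((q*s1 - x*c1*p)^2 - x^2) - 2*(1+x)*(s1*q)*(q*s1 - x*c1*p)) = 0 := by
    linear_combination ((-1)*q*x + (-1)*q^3 + (1)*c1*q^2 + (-1)*c1*q^2*x + (-1)*c1*q^4 + (1)*c1^2*q*x + (1)*c1^2*q^3 + (-1)*c1^2*q^3*x + (-1)*c1^3*q^2 + (1)*c1^3*q^2*x + (1)*c1^3*q^4 + (-1)*c1^3*q^4*x + (1)*s1*p*q*x + (2)*s1*c1*p*q^2*x + (-1)*s1*c1^2*p*q*x + (-1)*s1*c1^2*p*q^3 + (1)*s1*c1^2*p*q^3*x) * hP + ((1)*q^2*x + (-2)*q^4*x + (-1)*p^2*q^2*x + (-1)*c1*q^3 + (1)*c1*q^3*x + (1)*c1*q^5 + (-2)*c1*q^5*x + (1)*c1*p^2*q^3 + (-1)*c1^2*q^2*x + (-1)*c1^2*q^4 + (1)*c1^2*q^4*x + (1)*c1^2*q^6 + (3)*c1^2*p^2*q^2*x + (1)*c1^2*p^2*q^4 + (-2)*c1^2*p^4*q^2*x + (1)*c1^3*q^3 + (-1)*c1^3*q^3*x + (-1)*c1^3*q^5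 + (1)*c1^3*q^5*x + (1)*c1^3*p^2*q*x^2 + (-1)*c1^3*p^2*q^3 + (2)*c1^3*p^2*q^3*x + (-1)*c1^3*p^2*q^3*x^2 + (-1)*c1^3*p^2*q^5*x + (-1)*c1^3*p^4*q*x^2 + (-2)*c1^3*p^4*q^3*x + (-2)*c1^4*p^2*q^2*x + (1)*c1^4*p^2*q^2*x^2 + (2)*c1^4*p^2*q^4*x + (-1)*c1^4*p^2*q^4*x^2 + (2)*c1^4*p^4*q^2*x + (-1)*c1^4*p^4*q^2*x^2 + (-1)*s1*c1*p*q^3 + (-1)*s1*c1*p*q^3*x + (1)*s1*c1*p^3*q^3 + (1)*s1*c1^2*p^3*q^4 + (1)*s1*c1^3*p*q^3 + (-1)*s1*c1^3*p*q^3*x + (-1)*s1*c1^3*p*q^5 + (1)*s1*c1^3*p*q^5*x + (-1)*s1*c1^3*p^3*q*x^2 + (-1)*s1*c1^3*p^3*q^3 + (1)*s1*c1^3*p^3*q^3*x + (1)*s1*c1^3*p^3*q^3*x^2 + (1)*s1*c1^3*p^5*q*x^2 + (-1)*s1^2*p^2*q^2*x + (1)*s1^2*c1*p^2*q^3 + (1)*s1^2*c1^2*p^2*q^2*x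 + (-1)*s1^2*c1^2*p^2*q^4*x + (-2)*s1^2*c1^2*p^4*q^2*x + (1)*s1^3*c1*p^3*q^3) * h1 + ((-1)*q^2*x + (1)*c1*q^3 + (2)*c1^2*q^2*x + (1)*c1^2*q^2*x^2 + (1)*c1^2*q^4 + (1)*c1^2*q^4*x + (-2)*c1^2*p^2*q^2*x + (-2)*c1^3*q^3 + (1)*c1^3*q^3*x + (2)*c1^3*q^3*x^2 + (-1)*c1^3*p^2*q*x^2 + (-2)*c1^3*p^2*q^3*x + (-1)*c1^4*q^2*x + (-1)*c1^4*q^4 + (-1)*c1^4*q^4*x + (1)*c1^4*q^4*x^2 + (4)*c1^4*p^2*q^2*x + (-2)*c1^4*p^2*q^2*x^2 + (1)*c1^5*q^3 + (-1)*c1^5*q^3*x + (1)*c1^5*p^2*q*x^2 + (2)*c1^5*p^2*q^3*x + (-1)*c1^5*p^2*q^3*x^2 + (-2)*c1^6*p^2*q^2*x + (1)*c1^6*p^2*q^2*x^2 + (1)*s1*c1*p*q^3 + (-1)*s1*c1^2*p*q^2*x^2 + (1)*s1*c1^2*p*q^4 + (-2)*s1*c1^3*p*q^3 + (1)*s1*c1^3*p*q^3*x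 + (-1)*s1*c1^3*p*q^3*x^2 + (1)*s1*c1^3*p^3*q*x^2 + (-1)*s1*c1^4*p*q^4 + (1)*s1*c1^4*p*q^4*x + (1)*s1*c1^4*p^3*q^2*x^2 + (1)*s1*c1^5*p*q^3 + (-1)*s1*c1^5*p*q^3*x + (-1)*s1*c1^5*p^3*q*x^2) * h2
  rcases mul_eq_zero.mp key with h | h
  · exact absurd h (mul_ne_zero hD2 hq)
  · exact h

lemma lem_E3 {s1 c1 p q x : ℝ} (h1 : s1^2+c1^2 = 1) (h2 : p^2+q^2 = 1)
    (hD2 : q + c1*q^2 - c1*p^2*(c1*q + s1^2) ≠ 0) (hq : q ≠ 0)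
    (hP : x*(q + c1*q^2 - c1*p^2*(c1*q + s1^2)) + s1*q*(-s1 + (c1*q + s1^2)*p) = 0) :
    (1 + (c1*q + s1*p))*((q*s1 - x*c1*p)^2 - x^2) - 2*(1-x)*(s1*q)*(q*s1 - x*c1*p) = 0 := by
  have key : ((q + c1*q^2 - c1*p^2*(c1*q + s1^2))*q) *
      ((1 + (c1*q + s1*p))*((q*s1 - x*c1*p)^2 - x^2) - 2*(1-x)*(s1*q)*(q*s1 - x*c1*p)) = 0 := by
    linear_combination ((-1)*q*x + (1)*q^3 + (-1)*c1*q^2 + (-1)*c1*q^2*x + (1)*c1*q^4 + (1)*c1^2*q*x + (-1)*c1^2*q^3 + (-1)*c1^2*q^3*x + (1)*c1^3*q^2 + (1)*c1^3*q^2*x + (-1)*c1^3*q^4 + (-1)*c1^3*q^4*x + (-1)*s1*p*q*x + (-2)*s1*c1*p*q^2*x + (1)*s1*c1^2*p*q*x + (-1)*s1*c1^2*p*q^3 + (-1)*s1*c1^2*p*q^3*x) * hP + ((-1)*q^2*x + (2)*q^4*x + (1)*p^2*q^2*x + (-1)*c1*q^3 + (-1)*c1*q^3*x + (1)*c1*q^5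 + (2)*c1*q^5*x + (1)*c1*p^2*q^3 + (1)*c1^2*q^2*x + (-1)*c1^2*q^4 + (-1)*c1^2*q^4*x + (1)*c1^2*q^6 + (-3)*c1^2*p^2*q^2*x + (1)*c1^2*p^2*q^4 + (2)*c1^2*p^4*q^2*x + (1)*c1^3*q^3 + (1)*c1^3*q^3*x + (-1)*c1^3*q^5 + (-1)*c1^3*q^5*x + (1)*c1^3*p^2*q*x^2 + (-1)*c1^3*p^2*q^3 + (-2)*c1^3*p^2*q^3*x + (-1)*c1^3*p^2*q^3*x^2 + (1)*c1^3*p^2*q^5*x + (-1)*c1^3*p^4*q*x^2 + (2)*c1^3*p^4*q^3*x + (2)*c1^4*p^2*q^2*x + (1)*c1^4*p^2*q^2*x^2 + (-2)*c1^4*p^2*q^4*x + (-1)*c1^4*p^2*q^4*x^2 + (-2)*c1^4*p^4*q^2*x + (-1)*c1^4*p^4*q^2*x^2 + (1)*s1*c1*p*q^3 + (-1)*s1*c1*p*q^3*x + (-1)*s1*c1*p^3*q^3 + (-1)*s1*c1^2*p^3*q^4 + (-1)*s1*c1^3*p*q^3 + (-1)*s1*c1^3*p*q^3*x + (1)*s1*c1^3*p*q^5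 + (1)*s1*c1^3*p*q^5*x + (1)*s1*c1^3*p^3*q*x^2 + (1)*s1*c1^3*p^3*q^3 + (1)*s1*c1^3*p^3*q^3*x + (-1)*s1*c1^3*p^3*q^3*x^2 + (-1)*s1*c1^3*p^5*q*x^2 + (1)*s1^2*p^2*q^2*x + (1)*s1^2*c1*p^2*q^3 + (-1)*s1^2*c1^2*p^2*q^2*x + (1)*s1^2*c1^2*p^2*q^4*x + (2)*s1^2*c1^2*p^4*q^2*x + (-1)*s1^3*c1*p^3*q^3) * h1 + ((1)*q^2*x + (1)*c1*q^3 + (-2)*c1^2*q^2*x + (1)*c1^2*q^2*x^2 + (1)*c1^2*q^4 + (-1)*c1^2*q^4*x + (2)*c1^2*p^2*q^2*x + (-2)*c1^3*q^3 + (-1)*c1^3*q^3*x + (2)*c1^3*q^3*x^2 + (-1)*c1^3*p^2*q*x^2 + (2)*c1^3*p^2*q^3*x + (1)*c1^4*q^2*x + (-1)*c1^4*q^4 + (1)*c1^4*q^4*x + (1)*c1^4*q^4*x^2 + (-4)*c1^4*p^2*q^2*x + (-2)*c1^4*p^2*q^2*x^2 + (1)*c1^5*q^3 + (1)*c1^5*q^3*x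 + (1)*c1^5*p^2*q*x^2 + (-2)*c1^5*p^2*q^3*x + (-1)*c1^5*p^2*q^3*x^2 + (2)*c1^6*p^2*q^2*x + (1)*c1^6*p^2*q^2*x^2 + (-1)*s1*c1*p*q^3 + (1)*s1*c1^2*p*q^2*x^2 + (-1)*s1*c1^2*p*q^4 + (2)*s1*c1^3*p*q^3 + (1)*s1*c1^3*p*q^3*x + (1)*s1*c1^3*p*q^3*x^2 + (-1)*s1*c1^3*p^3*q*x^2 + (1)*s1*c1^4*p*q^4 + (1)*s1*c1^4*p*q^4*x + (-1)*s1*c1^4*p^3*q^2*x^2 + (-1)*s1*c1^5*p*q^3 + (-1)*s1*c1^5*p*q^3*x + (1)*s1*c1^5*p^3*q*x^2) * h2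
  rcases mul_eq_zero.mp key with h | h
  · exact absurd h (mul_ne_zero hD2 hq)
  · exact h

lemma lem_f2_anti {s1 c1 p q r t x : ℝ} (h2 : p^2+q^2 = 1) (h3 : r^2+t^2 = 1)
    (hs1 : 0 ≤ s1) (hc1 : 0 ≤ c1) (hp0 : 0 ≤ p) (ht0 : 0 ≤ t)
    (hpr : p ≤ r) (htq : t ≤ q) (hrc : r ≤ c1)
    (hx : x < 0) (hx1 : -1 < x)
    (hA1 : 0 < q*s1 - x*c1*p + x) (hA2 : 0 < q*s1 - x*c1*p - x)
    (hB1 : 0 < t*s1 - x*c1*r + x) (hB2 : 0 < t*s1 - x*c1*r - x) :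
    (1 - x^2) * s1 * t * (t*s1 - x*c1*r) / (-2*(x^2 - (t*s1 - x*c1*r)^2)) ≤
    (1 - x^2) * s1 * q * (q*s1 - x*c1*p) / (-2*(x^2 - (q*s1 - x*c1*p)^2)) := by
  set ua := q*s1 - x*c1*p with hua
  set ub := t*s1 - x*c1*r with hub
  have hdA : 0 < -2*(x^2 - ua^2) := by nlinarith
  have hdB : 0 < -2*(x^2 - ub^2) := by nlinarith
  rw [div_le_div_iff₀ hdB hdA]
  have hx2 : 0 < 1 - x^2 := by nlinarith
  have hbr1 : 0 ≤ c1*(q*r - t*p) + (q - t) := by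
    have h0 : 0 ≤ q*r - t*p := by nlinarith
    have h0' : 0 ≤ c1*(q*r - t*p) := mul_nonneg hc1 h0
    linarith
  have hbr2 : 0 ≤ c1*(q*r - t*p) - (q - t) := by
    have := lem_key h2 h3 hp0 ht0 hpr htq hrc
    nlinarith
  have H1 : s1*(t*(ua - x) - q*(ub - x)) ≤ 0 := by
    have e : s1*(t*(ua - x) - q*(ub - x)) = s1*x*(c1*(q*r - t*p) + (q - t)) := by
      rw [hua, hub]; ring
    rw [e]
    exact mul_nonpos_of_nonpos_of_nonneg (mul_nonpos_of_nonneg_of_nonpos hs1 hx.le) hbr1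
  have H2 : s1*(t*(ua + x) - q*(ub + x)) ≤ 0 := by
    have e : s1*(t*(ua + x) - q*(ub + x)) = s1*x*(c1*(q*r - t*p) - (q - t)) := by
      rw [hua, hub]; ring
    rw [e]
    exact mul_nonpos_of_nonpos_of_nonneg (mul_nonpos_of_nonneg_of_nonpos hs1 hx.le) hbr2
  have T1 : (1 - x^2)*((ua + x)*(ub + x))*(s1*(t*(ua - x) - q*(ub - x))) ≤ 0 :=
    mul_nonpos_of_nonneg_of_nonpos (by positivity) H1
  have T2 : (1 - x^2)*((ua - x)*(ub - x))*(s1*(t*(ua + x) - q*(ub + x))) ≤ 0 :=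
    mul_nonpos_of_nonneg_of_nonpos (by positivity) H2
  have idn : (1-x^2)*s1*q*ua*(-2*(x^2-ub^2)) - (1-x^2)*s1*t*ub*(-2*(x^2-ua^2))
      = -((1-x^2)*((ua + x)*(ub + x))*(s1*(t*(ua - x) - q*(ub - x))))
        - ((1-x^2)*((ua - x)*(ub - x))*(s1*(t*(ua + x) - q*(ub + x)))) := by ring
  linarith [T1, T2, idn]

lemma lem_f2_mono {s1 c1 p q r t x : ℝ} (h2 : p^2+q^2 = 1) (h3 : r^2+t^2 = 1)
    (hs1 : 0 ≤ s1) (hc1 : 0 ≤ c1) (hp0 : 0 ≤ p) (ht0 : 0 ≤ t)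
    (hpr : p ≤ r) (htq : t ≤ q) (hrc : r ≤ c1)
    (hx : 0 < x) (hx1 : x < 1)
    (hA1 : 0 < q*s1 - x*c1*p + x) (hA2 : 0 < q*s1 - x*c1*p - x)
    (hB1 : 0 < t*s1 - x*c1*r + x) (hB2 : 0 < t*s1 - x*c1*r - x) :
    (1 - x^2) * s1 * q * (q*s1 - x*c1*p) / (-2*(x^2 - (q*s1 - x*c1*p)^2)) ≤
    (1 - x^2) * s1 * t * (t*s1 - x*c1*r) / (-2*(x^2 - (t*s1 - x*c1*r)^2)) := by
  set ua := q*s1 - x*c1*p with hua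
  set ub := t*s1 - x*c1*r with hub
  have hdA : 0 < -2*(x^2 - ua^2) := by nlinarith
  have hdB : 0 < -2*(x^2 - ub^2) := by nlinarith
  rw [div_le_div_iff₀ hdA hdB]
  have hx2 : 0 < 1 - x^2 := by nlinarith
  have hbr1 : 0 ≤ c1*(q*r - t*p) + (q - t) := by
    have h0 : 0 ≤ q*r - t*p := by nlinarith
    have h0' : 0 ≤ c1*(q*r - t*p) := mul_nonneg hc1 h0
    linarith
  have hbr2 : 0 ≤ c1*(q*r - t*p) - (q - t) := by
    have := lem_key h2 h3 hp0 ht0 hpr htq hrc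
    nlinarith
  have H1 : 0 ≤ s1*(t*(ua - x) - q*(ub - x)) := by
    have e : s1*(t*(ua - x) - q*(ub - x)) = s1*x*(c1*(q*r - t*p) + (q - t)) := by
      rw [hua, hub]; ring
    rw [e]
    exact mul_nonneg (mul_nonneg hs1 hx.le) hbr1
  have H2 : 0 ≤ s1*(t*(ua + x) - q*(ub + x)) := by
    have e : s1*(t*(ua + x) - q*(ub + x)) = s1*x*(c1*(q*r - t*p) - (q - t)) := by
      rw [hua, hub]; ring
    rw [e]
    exact mul_nonneg (mul_nonneg hs1 hx.le) hbr2
  have T1 : 0 ≤ (1 - x^2)*((ua + x)*(ub + x))*(s1*(t*(ua - x) - q*(ub - x))) :=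
    mul_nonneg (by positivity) H1
  have T2 : 0 ≤ (1 - x^2)*((ua - x)*(ub - x))*(s1*(t*(ua + x) - q*(ub + x))) :=
    mul_nonneg (by positivity) H2
  have idn : (1-x^2)*s1*t*ub*(-2*(x^2-ua^2)) - (1-x^2)*s1*q*ua*(-2*(x^2-ub^2))
      = ((1-x^2)*((ua + x)*(ub + x))*(s1*(t*(ua - x) - q*(ub - x))))
        + ((1-x^2)*((ua - x)*(ub - x))*(s1*(t*(ua + x) - q*(ub + x)))) := by ring
  linarith [T1, T2, idn]

lemma lem_branch (γ1 w x3 : ℝ) (hq : 0 < Real.cos w)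
    (hD2 : 0 < Real.cos w + Real.cos γ1*(Real.cos w)^2
        - Real.cos γ1*(Real.sin w)^2*(Real.cos γ1*Real.cos w + (Real.sin γ1)^2)) :
    (x3 ≤ x33 γ1 w ↔
      x3*(Real.cos w + Real.cos γ1*(Real.cos w)^2
          - Real.cos γ1*(Real.sin w)^2*(Real.cos γ1*Real.cos w + (Real.sin γ1)^2))
        + Real.sin γ1*Real.cos w*(Real.sin γ1
            + (Real.cos γ1*Real.cos w + (Real.sin γ1)^2)*Real.sin w) ≤ 0) ∧
    (x3 < x34 γ1 w ↔
      x3*(Real.cos w + Real.cos γ1*(Real.cos w)^2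
          - Real.cos γ1*(Real.sin w)^2*(Real.cos γ1*Real.cos w + (Real.sin γ1)^2))
        + Real.sin γ1*Real.cos w*(-Real.sin γ1
            + (Real.cos γ1*Real.cos w + (Real.sin γ1)^2)*Real.sin w) < 0) := by
  set s1 := Real.sin γ1
  set c1 := Real.cos γ1
  set p := Real.sin w
  set q := Real.cos w
  set D2 := q + c1*q^2 - c1*p^2*(c1*q + s1^2) with hD2def
  have hq0 : q ≠ 0 := ne_of_gt hq
  have hDD0 : (1 + c1*(q - p*(c1*p + s1^2 * Real.tan w))) * q = D2 := by
    rw [Real.tan_eq_sin_div_cos]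
    change (1 + c1*(q - p*(c1*p + s1^2 * (p / q)))) * q = D2
    field_simp
    ring
  have hDD : 0 < 1 + c1*(q - p*(c1*p + s1^2 * Real.tan w)) := by
    by_contra h
    push_neg at h
    have h8 := mul_nonpos_of_nonpos_of_nonneg h hq.le
    rw [hDD0] at h8
    linarith
  constructor
  · rw [x33, le_div_iff₀ hDD, ← mul_le_mul_iff_of_pos_right hq]
    have e2 : x3 * (1 + c1*(q - p*(c1*p + s1^2 * Real.tan w))) * q = x3 * D2 := by
      rw [mul_assoc, hDD0]
    constructor <;> intro h <;> nlinarith [h, e2]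
  · rw [x34, lt_div_iff₀ hDD, ← mul_lt_mul_iff_of_pos_right hq]
    have e2 : x3 * (1 + c1*(q - p*(c1*p + s1^2 * Real.tan w))) * q = x3 * D2 := by
      rw [mul_assoc, hDD0]
    constructor <;> intro h <;> nlinarith [h, e2]

lemma lem_wfacts {γ1 w : ℝ} (hγ0 : 0 < γ1) (hγpi : γ1 < π/2) (hw0 : 0 ≤ w)
    (hwγ : w ≤ γ1) (hwpi : w ≤ π/2 - γ1) :
    0 ≤ Real.sin w ∧ 0 < Real.cos w ∧ Real.sin w ≤ Real.sin γ1 ∧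
    Real.sin w ≤ Real.cos γ1 ∧ Real.cos γ1 ≤ Real.cos w ∧
    Real.sin γ1 ≤ Real.cos w ∧ Real.sin w ≤ Real.cos w := by
  have hpi := Real.pi_pos
  have h1 : 0 ≤ Real.sin w := Real.sin_nonneg_of_nonneg_of_le_pi hw0 (by linarith)
  have h2 : 0 < Real.cos w := Real.cos_pos_of_mem_Ioo ⟨by linarith, by linarith⟩
  have h3 : Real.sin w ≤ Real.sin γ1 := by
    rw [← Real.cos_pi_div_two_sub, ← Real.cos_pi_div_two_sub]
    exact Real.cos_le_cos_of_nonneg_of_le_pi (by linarith) (by linarith) (by linarith)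
  have h4 : Real.sin w ≤ Real.cos γ1 := by
    rw [← Real.cos_pi_div_two_sub]
    exact Real.cos_le_cos_of_nonneg_of_le_pi (by linarith) (by linarith) (by linarith)
  have h5 : Real.cos γ1 ≤ Real.cos w :=
    Real.cos_le_cos_of_nonneg_of_le_pi hw0 (by linarith) hwγ
  have h6 : Real.sin γ1 ≤ Real.cos w := by
    rw [← Real.cos_pi_div_two_sub]
    exact Real.cos_le_cos_of_nonneg_of_le_pi hw0 (by linarith) (by linarith)
  exact ⟨h1, h2, h3, h4, h5, h6, le_trans h4 h5⟩

lemma lem_f1le {x3 u v : ℝ} (hx : x3 ≤ 1) (h : Real.cos v ≤ Real.cos u) :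
    (1 - x3) * (1 + Real.cos v) / 4 ≤ (1 - x3) * (1 + Real.cos u) / 4 := by
  have := mul_le_mul_of_nonneg_left (by linarith : 1 + Real.cos v ≤ 1 + Real.cos u)
    (by linarith : (0:ℝ) ≤ 1 - x3)
  linarith

lemma lem_f3le {x3 u v : ℝ} (hx : -1 ≤ x3) (h : Real.cos v ≤ Real.cos u) :
    (1 + x3) * (1 + Real.cos v) / 4 ≤ (1 + x3) * (1 + Real.cos u) / 4 := by
  have := mul_le_mul_of_nonneg_left (by linarith : 1 + Real.cos v ≤ 1 + Real.cos u)
    (by linarith : (0:ℝ) ≤ 1 + x3)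
  linarith

lemma lem_den {u x : ℝ} (h1 : 0 < u + x) (h2 : 0 < u - x) : (0:ℝ) < -2*(x^2 - u^2) := by
  nlinarith [mul_pos h1 h2]

lemma lem_ux2neg {s1 c1 p q x : ℝ} (hq : 0 ≤ q) (hs1 : 0 ≤ s1) (hc1 : 0 ≤ c1)
    (hp0 : 0 ≤ p) (hx : x < 0) : 0 < q*s1 - x*c1*p - x := by
  nlinarith [mul_nonneg hq hs1, mul_nonneg hc1 hp0]

lemma lem_ux1pos {s1 c1 p q x : ℝ} (h2 : p^2+q^2 = 1) (hq : 0 < q) (hs1 : 0 < s1)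
    (hc1 : 0 ≤ c1) (hc1' : c1 ≤ 1) (hp0 : 0 ≤ p) (hx : 0 < x) :
    0 < q*s1 - x*c1*p + x := by
  have hp1 : p < 1 := by nlinarith
  have hcp : c1*p < 1 := by nlinarith
  nlinarith [mul_pos hq hs1, mul_pos hx (by linarith : (0:ℝ) < 1 - c1*p)]

end Auxiliary

lemma main_neg {γ1 a b x3 : ℝ} (hγpi : γ1 ≤ π/2)
    (ha : a ∈ Set.Icc 0 (min γ1 (π/2 - γ1))) (hb : b ∈ Set.Icc 0 (min γ1 (π/2 - γ1)))
    (hab : a ≤ b) (hx1 : -1 < x3) (hx0 : x3 < 0) :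
    gGM γ1 b x3 ≤ gGM γ1 a x3 := by
  rcases eq_or_lt_of_le hab with rfl | hab
  · exact le_refl _
  obtain ⟨ha0, haM⟩ := ha
  obtain ⟨hb0, hbM⟩ := hb
  have hbγ : b ≤ γ1 := le_trans hbM (min_le_left _ _)
  have hbp : b ≤ π/2 - γ1 := le_trans hbM (min_le_right _ _)
  have haγ : a ≤ γ1 := le_trans hab.le hbγ
  have hap : a ≤ π/2 - γ1 := le_trans hab.le hbp
  have hbpos : 0 < b := lt_of_le_of_lt ha0 hab
  have hγ0 : 0 < γ1 := lt_of_lt_of_le hbpos hbγ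
  have hγlt : γ1 < π/2 := by linarith
  have hpi := Real.pi_pos
  have hs1 : 0 < Real.sin γ1 := Real.sin_pos_of_pos_of_lt_pi hγ0 (by linarith)
  have hc1 : 0 < Real.cos γ1 := Real.cos_pos_of_mem_Ioo ⟨by linarith, hγlt⟩
  have h1 : Real.sin γ1 ^ 2 + Real.cos γ1 ^ 2 = 1 := Real.sin_sq_add_cos_sq γ1
  obtain ⟨hpa0, hqa, hpas, hpac, hcqa, hsqa, hpqa⟩ := lem_wfacts hγ0 hγlt ha0 haγ hap
  obtain ⟨hpb0, hqb, hpbs, hpbc, hcqb, hsqb, hpqb⟩ := lem_wfacts hγ0 hγlt hb0 hbγ hbp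
  have h2a : Real.sin a ^ 2 + Real.cos a ^ 2 = 1 := Real.sin_sq_add_cos_sq a
  have h2b : Real.sin b ^ 2 + Real.cos b ^ 2 = 1 := Real.sin_sq_add_cos_sq b
  have hD2a := lem_D2 h1 hs1 hc1.le hqa hpa0 hpac hpqa
  have hD2b := lem_D2 h1 hs1 hc1.le hqb hpb0 hpbc hpqb
  obtain ⟨hbr1a, hbr2a⟩ := lem_branch γ1 a x3 hqa hD2a
  obtain ⟨hbr1b, hbr2b⟩ := lem_branch γ1 b x3 hqb hD2b
  have hsinab : Real.sin a ≤ Real.sin b := by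
    rw [← Real.cos_pi_div_two_sub, ← Real.cos_pi_div_two_sub]
    exact Real.cos_le_cos_of_nonneg_of_le_pi (by linarith) (by linarith) (by linarith)
  have hcosab : Real.cos b ≤ Real.cos a :=
    Real.cos_le_cos_of_nonneg_of_le_pi ha0 (by linarith) hab.le
  have hFcont : ContinuousOn (fun w : ℝ => x3*(Real.cos w + Real.cos γ1*(Real.cos w)^2 - Real.cos γ1*(Real.sin w)^2*(Real.cos γ1*Real.cos w + (Real.sin γ1)^2)) + Real.sin γ1*Real.cos w*(Real.sin γ1 + (Real.cos γ1*Real.cos w + (Real.sin γ1)^2)*Real.sin w)) (Set.Icc a b) :=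
    Continuous.continuousOn (by fun_prop)

  by_cases hA : x3 ≤ x33 γ1 a
  · by_cases hB : x3 ≤ x33 γ1 b
    · unfold gGM
      rw [if_pos hA, if_pos hB]
      exact lem_f1le (by linarith)
        (Real.cos_le_cos_of_nonneg_of_le_pi (by linarith) (by linarith) (by linarith))
    · -- a in branch 1, b in branch 2
      have hQb := lem_Qneg h1 h2b hs1.le hc1.le hqb.le hpb0 hpbs hx0 hD2b
      have hPb : 0 < x3*(Real.cos b + Real.cos γ1*(Real.cos b)^2 - Real.cos γ1*(Real.sin b)^2*(Real.cos γ1*Real.cos b + (Real.sin γ1)^2)) + Real.sin γ1*Real.cos b*(Real.sin γ1 + (Real.cos γ1*Real.cos b + (Real.sin γ1)^2)*Real.sin b) :=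
        not_le.mp (fun h => hB (hbr1b.mpr h))
      unfold gGM
      rw [if_pos hA, if_neg hB, if_pos (hbr2b.mpr hQb)]
      obtain ⟨c, hcmem, hFc⟩ := intermediate_value_Icc hab.le hFcont
        (Set.mem_Icc.mpr ⟨hbr1a.mp hA, hPb.le⟩)
      obtain ⟨hac, hcb⟩ := hcmem
      have hc0 : 0 ≤ c := le_trans ha0 hac
      obtain ⟨hpc0, hqc, hpcs, hpcc, hcqc, hsqc, hpqc⟩ :=
        lem_wfacts hγ0 hγlt hc0 (le_trans hcb hbγ) (le_trans hcb hbp)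
      have h2c : Real.sin c ^ 2 + Real.cos c ^ 2 = 1 := Real.sin_sq_add_cos_sq c
      have hD2c := lem_D2 h1 hs1 hc1.le hqc hpc0 hpcc hpqc
      have hPc0 : x3*(Real.cos c + Real.cos γ1*(Real.cos c)^2 - Real.cos γ1*(Real.sin c)^2*(Real.cos γ1*Real.cos c + (Real.sin γ1)^2)) + Real.sin γ1*Real.cos c*(Real.sin γ1 + (Real.cos γ1*Real.cos c + (Real.sin γ1)^2)*Real.sin c) = 0 := hFc
      have hsin_ac : Real.sin a ≤ Real.sin c := by
        rw [← Real.cos_pi_div_two_sub, ← Real.cos_pi_div_two_sub]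
        exact Real.cos_le_cos_of_nonneg_of_le_pi (by linarith) (by linarith) (by linarith)
      have hsin_cb : Real.sin c ≤ Real.sin b := by
        rw [← Real.cos_pi_div_two_sub, ← Real.cos_pi_div_two_sub]
        exact Real.cos_le_cos_of_nonneg_of_le_pi (by linarith) (by linarith) (by linarith)
      have hcos_ca : Real.cos c ≤ Real.cos a :=
        Real.cos_le_cos_of_nonneg_of_le_pi ha0 (by linarith) hac
      have hcos_bc : Real.cos b ≤ Real.cos c :=
        Real.cos_le_cos_of_nonneg_of_le_pi hc0 (by linarith) hcb
      have hu1c : 0 < Real.cos c*Real.sin γ1 - x3*Real.cos γ1*Real.sin c + x3 :=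
        lem_uplus h1 h2c hs1 hc1 hqc hpc0 hpcc hpqc hsqc hx1 (le_of_eq hPc0.symm)
      have hu2c : 0 < Real.cos c*Real.sin γ1 - x3*Real.cos γ1*Real.sin c - x3 := lem_ux2neg hqc.le hs1.le hc1.le hpc0 hx0
      have hdenc : (0:ℝ) < -2*(x3^2 - (Real.cos c*Real.sin γ1 - x3*Real.cos γ1*Real.sin c)^2) := lem_den hu1c hu2c
      have hE := lem_E1 h1 h2c (ne_of_gt hD2c) (ne_of_gt hqc) hPc0
      have heq : (1 - x3^2) * Real.sin γ1 * Real.cos c * (Real.cos c*Real.sin γ1 - x3*Real.cos γ1*Real.sin c) / (-2*(x3^2 - (Real.cos c*Real.sin γ1 - x3*Real.cos γ1*Real.sin c)^2))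
          = (1 - x3) * (1 + Real.cos (γ1 + c)) / 4 := by
        rw [Real.cos_add, div_eq_div_iff (ne_of_gt hdenc) (by norm_num : (4:ℝ) ≠ 0)]
        linear_combination (-2*(1-x3)) * hE
      have hu1b : 0 < Real.cos b*Real.sin γ1 - x3*Real.cos γ1*Real.sin b + x3 :=
        lem_uplus h1 h2b hs1 hc1 hqb hpb0 hpbc hpqb hsqb hx1 hPb.le
      have hu2b : 0 < Real.cos b*Real.sin γ1 - x3*Real.cos γ1*Real.sin b - x3 := lem_ux2neg hqb.le hs1.le hc1.le hpb0 hx0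
      have step1 : (1 - x3^2) * Real.sin γ1 * Real.cos b * (Real.cos b*Real.sin γ1 - x3*Real.cos γ1*Real.sin b) / (-2*(x3^2 - (Real.cos b*Real.sin γ1 - x3*Real.cos γ1*Real.sin b)^2)) ≤ (1 - x3^2) * Real.sin γ1 * Real.cos c * (Real.cos c*Real.sin γ1 - x3*Real.cos γ1*Real.sin c) / (-2*(x3^2 - (Real.cos c*Real.sin γ1 - x3*Real.cos γ1*Real.sin c)^2)) :=
        lem_f2_anti h2c h2b hs1.le hc1.le hpc0 hqb.le hsin_cb hcos_bc hpbc hx0 hx1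
          hu1c hu2c hu1b hu2b
      have step2 : (1 - x3) * (1 + Real.cos (γ1 + c)) / 4
          ≤ (1 - x3) * (1 + Real.cos (γ1 + a)) / 4 :=
        lem_f1le (by linarith)
          (Real.cos_le_cos_of_nonneg_of_le_pi (by linarith) (by linarith) (by linarith))
      linarith only [step1, step2, heq.le, heq.ge]
  · have hQa := lem_Qneg h1 h2a hs1.le hc1.le hqa.le hpa0 hpas hx0 hD2a
    have hPa : 0 < x3*(Real.cos a + Real.cos γ1*(Real.cos a)^2 - Real.cos γ1*(Real.sin a)^2*(Real.cos γ1*Real.cos a + (Real.sin γ1)^2)) + Real.sin γ1*Real.cos a*(Real.sin γ1 + (Real.cos γ1*Real.cos a + (Real.sin γ1)^2)*Real.sin a) :=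
      not_le.mp (fun h => hA (hbr1a.mpr h))
    have hu1a : 0 < Real.cos a*Real.sin γ1 - x3*Real.cos γ1*Real.sin a + x3 :=
      lem_uplus h1 h2a hs1 hc1 hqa hpa0 hpac hpqa hsqa hx1 hPa.le
    have hu2a : 0 < Real.cos a*Real.sin γ1 - x3*Real.cos γ1*Real.sin a - x3 := lem_ux2neg hqa.le hs1.le hc1.le hpa0 hx0
    by_cases hB : x3 ≤ x33 γ1 b
    · -- a in branch 2, b in branch 1
      unfold gGM
      rw [if_neg hA, if_pos (hbr2a.mpr hQa), if_pos hB]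
      obtain ⟨c, hcmem, hFc⟩ := intermediate_value_Icc' hab.le hFcont
        (Set.mem_Icc.mpr ⟨hbr1b.mp hB, hPa.le⟩)
      obtain ⟨hac, hcb⟩ := hcmem
      have hc0 : 0 ≤ c := le_trans ha0 hac
      obtain ⟨hpc0, hqc, hpcs, hpcc, hcqc, hsqc, hpqc⟩ :=
        lem_wfacts hγ0 hγlt hc0 (le_trans hcb hbγ) (le_trans hcb hbp)
      have h2c : Real.sin c ^ 2 + Real.cos c ^ 2 = 1 := Real.sin_sq_add_cos_sq c
      have hD2c := lem_D2 h1 hs1 hc1.le hqc hpc0 hpcc hpqc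
      have hPc0 : x3*(Real.cos c + Real.cos γ1*(Real.cos c)^2 - Real.cos γ1*(Real.sin c)^2*(Real.cos γ1*Real.cos c + (Real.sin γ1)^2)) + Real.sin γ1*Real.cos c*(Real.sin γ1 + (Real.cos γ1*Real.cos c + (Real.sin γ1)^2)*Real.sin c) = 0 := hFc
      have hsin_ac : Real.sin a ≤ Real.sin c := by
        rw [← Real.cos_pi_div_two_sub, ← Real.cos_pi_div_two_sub]
        exact Real.cos_le_cos_of_nonneg_of_le_pi (by linarith) (by linarith) (by linarith)
      have hsin_cb : Real.sin c ≤ Real.sin b := by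
        rw [← Real.cos_pi_div_two_sub, ← Real.cos_pi_div_two_sub]
        exact Real.cos_le_cos_of_nonneg_of_le_pi (by linarith) (by linarith) (by linarith)
      have hcos_ca : Real.cos c ≤ Real.cos a :=
        Real.cos_le_cos_of_nonneg_of_le_pi ha0 (by linarith) hac
      have hcos_bc : Real.cos b ≤ Real.cos c :=
        Real.cos_le_cos_of_nonneg_of_le_pi hc0 (by linarith) hcb
      have hu1c : 0 < Real.cos c*Real.sin γ1 - x3*Real.cos γ1*Real.sin c + x3 :=
        lem_uplus h1 h2c hs1 hc1 hqc hpc0 hpcc hpqc hsqc hx1 (le_of_eq hPc0.symm)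
      have hu2c : 0 < Real.cos c*Real.sin γ1 - x3*Real.cos γ1*Real.sin c - x3 := lem_ux2neg hqc.le hs1.le hc1.le hpc0 hx0
      have hdenc : (0:ℝ) < -2*(x3^2 - (Real.cos c*Real.sin γ1 - x3*Real.cos γ1*Real.sin c)^2) := lem_den hu1c hu2c
      have hE := lem_E1 h1 h2c (ne_of_gt hD2c) (ne_of_gt hqc) hPc0
      have heq : (1 - x3^2) * Real.sin γ1 * Real.cos c * (Real.cos c*Real.sin γ1 - x3*Real.cos γ1*Real.sin c) / (-2*(x3^2 - (Real.cos c*Real.sin γ1 - x3*Real.cos γ1*Real.sin c)^2))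
          = (1 - x3) * (1 + Real.cos (γ1 + c)) / 4 := by
        rw [Real.cos_add, div_eq_div_iff (ne_of_gt hdenc) (by norm_num : (4:ℝ) ≠ 0)]
        linear_combination (-2*(1-x3)) * hE
      have step1 : (1 - x3^2) * Real.sin γ1 * Real.cos c * (Real.cos c*Real.sin γ1 - x3*Real.cos γ1*Real.sin c) / (-2*(x3^2 - (Real.cos c*Real.sin γ1 - x3*Real.cos γ1*Real.sin c)^2)) ≤ (1 - x3^2) * Real.sin γ1 * Real.cos a * (Real.cos a*Real.sin γ1 - x3*Real.cos γ1*Real.sin a) / (-2*(x3^2 - (Real.cos a*Real.sin γ1 - x3*Real.cos γ1*Real.sin a)^2)) :=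
        lem_f2_anti h2a h2c hs1.le hc1.le hpa0 hqc.le hsin_ac hcos_ca hpcc hx0 hx1
          hu1a hu2a hu1c hu2c
      have step2 : (1 - x3) * (1 + Real.cos (γ1 + b)) / 4
          ≤ (1 - x3) * (1 + Real.cos (γ1 + c)) / 4 :=
        lem_f1le (by linarith)
          (Real.cos_le_cos_of_nonneg_of_le_pi (by linarith) (by linarith) (by linarith))
      linarith only [step1, step2, heq.le, heq.ge]
    · -- both in branch 2
      have hQb := lem_Qneg h1 h2b hs1.le hc1.le hqb.le hpb0 hpbs hx0 hD2b
      have hPb : 0 < x3*(Real.cos b + Real.cos γ1*(Real.cos b)^2 - Real.cos γ1*(Real.sin b)^2*(Real.cos γ1*Real.cos b + (Real.sin γ1)^2)) + Real.sin γ1*Real.cos b*(Real.sin γ1 + (Real.cos γ1*Real.cos b + (Real.sin γ1)^2)*Real.sin b) :=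
        not_le.mp (fun h => hB (hbr1b.mpr h))
      have hu1b : 0 < Real.cos b*Real.sin γ1 - x3*Real.cos γ1*Real.sin b + x3 :=
        lem_uplus h1 h2b hs1 hc1 hqb hpb0 hpbc hpqb hsqb hx1 hPb.le
      have hu2b : 0 < Real.cos b*Real.sin γ1 - x3*Real.cos γ1*Real.sin b - x3 := lem_ux2neg hqb.le hs1.le hc1.le hpb0 hx0
      unfold gGM
      rw [if_neg hA, if_pos (hbr2a.mpr hQa), if_neg hB, if_pos (hbr2b.mpr hQb)]
      exact lem_f2_anti h2a h2b hs1.le hc1.le hpa0 hqb.le hsinab hcosab hpbc hx0 hx1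
        hu1a hu2a hu1b hu2b

lemma main_pos {γ1 a b x3 : ℝ} (hγpi : γ1 ≤ π/2)
    (ha : a ∈ Set.Icc 0 (min γ1 (π/2 - γ1))) (hb : b ∈ Set.Icc 0 (min γ1 (π/2 - γ1)))
    (hab : a ≤ b) (hx0 : 0 < x3) (hx1 : x3 < 1) :
    gGM γ1 a x3 ≤ gGM γ1 b x3 := by
  rcases eq_or_lt_of_le hab with rfl | hab
  · exact le_refl _
  obtain ⟨ha0, haM⟩ := ha
  obtain ⟨hb0, hbM⟩ := hb
  have hbγ : b ≤ γ1 := le_trans hbM (min_le_left _ _)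
  have hbp : b ≤ π/2 - γ1 := le_trans hbM (min_le_right _ _)
  have haγ : a ≤ γ1 := le_trans hab.le hbγ
  have hap : a ≤ π/2 - γ1 := le_trans hab.le hbp
  have hbpos : 0 < b := lt_of_le_of_lt ha0 hab
  have hγ0 : 0 < γ1 := lt_of_lt_of_le hbpos hbγ
  have hγlt : γ1 < π/2 := by linarith
  have hpi := Real.pi_pos
  have hs1 : 0 < Real.sin γ1 := Real.sin_pos_of_pos_of_lt_pi hγ0 (by linarith)
  have hc1 : 0 < Real.cos γ1 := Real.cos_pos_of_mem_Ioo ⟨by linarith, hγlt⟩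
  have h1 : Real.sin γ1 ^ 2 + Real.cos γ1 ^ 2 = 1 := Real.sin_sq_add_cos_sq γ1
  obtain ⟨hpa0, hqa, hpas, hpac, hcqa, hsqa, hpqa⟩ := lem_wfacts hγ0 hγlt ha0 haγ hap
  obtain ⟨hpb0, hqb, hpbs, hpbc, hcqb, hsqb, hpqb⟩ := lem_wfacts hγ0 hγlt hb0 hbγ hbp
  have h2a : Real.sin a ^ 2 + Real.cos a ^ 2 = 1 := Real.sin_sq_add_cos_sq a
  have h2b : Real.sin b ^ 2 + Real.cos b ^ 2 = 1 := Real.sin_sq_add_cos_sq b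
  have hD2a := lem_D2 h1 hs1 hc1.le hqa hpa0 hpac hpqa
  have hD2b := lem_D2 h1 hs1 hc1.le hqb hpb0 hpbc hpqb
  obtain ⟨hbr1a, hbr2a⟩ := lem_branch γ1 a x3 hqa hD2a
  obtain ⟨hbr1b, hbr2b⟩ := lem_branch γ1 b x3 hqb hD2b
  have hsinab : Real.sin a ≤ Real.sin b := by
    rw [← Real.cos_pi_div_two_sub, ← Real.cos_pi_div_two_sub]
    exact Real.cos_le_cos_of_nonneg_of_le_pi (by linarith) (by linarith) (by linarith)
  have hcosab : Real.cos b ≤ Real.cos a :=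
    Real.cos_le_cos_of_nonneg_of_le_pi ha0 (by linarith) hab.le
  have hFcont : ContinuousOn (fun w : ℝ => x3*(Real.cos w + Real.cos γ1*(Real.cos w)^2 - Real.cos γ1*(Real.sin w)^2*(Real.cos γ1*Real.cos w + (Real.sin γ1)^2)) + Real.sin γ1*Real.cos w*(-Real.sin γ1 + (Real.cos γ1*Real.cos w + (Real.sin γ1)^2)*Real.sin w)) (Set.Icc a b) :=
    Continuous.continuousOn (by fun_prop)

  have hc1le1 : Real.cos γ1 ≤ 1 := Real.cos_le_one γ1
  have hPa := lem_Ppos hs1.le hc1.le hqa.le hpa0 hx0 hD2a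
  have hPb := lem_Ppos hs1.le hc1.le hqb.le hpb0 hx0 hD2b
  have hnA : ¬ (x3 ≤ x33 γ1 a) := fun h => absurd (hbr1a.mp h) (not_le.mpr hPa)
  have hnB : ¬ (x3 ≤ x33 γ1 b) := fun h => absurd (hbr1b.mp h) (not_le.mpr hPb)
  have hu1a : 0 < Real.cos a*Real.sin γ1 - x3*Real.cos γ1*Real.sin a + x3 :=
    lem_ux1pos h2a hqa hs1 hc1.le hc1le1 hpa0 hx0
  have hu1b : 0 < Real.cos b*Real.sin γ1 - x3*Real.cos γ1*Real.sin b + x3 :=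
    lem_ux1pos h2b hqb hs1 hc1.le hc1le1 hpb0 hx0
  by_cases hA : x3 < x34 γ1 a
  · have hu2a : 0 < Real.cos a*Real.sin γ1 - x3*Real.cos γ1*Real.sin a - x3 :=
      lem_uminus h1 hs1 hc1 hqa hpa0 hpac hpqa hsqa (hbr2a.mp hA).le
    by_cases hB : x3 < x34 γ1 b
    · have hu2b : 0 < Real.cos b*Real.sin γ1 - x3*Real.cos γ1*Real.sin b - x3 :=
        lem_uminus h1 hs1 hc1 hqb hpb0 hpbc hpqb hsqb (hbr2b.mp hB).le
      unfold gGM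
      rw [if_neg hnA, if_pos hA, if_neg hnB, if_pos hB]
      exact lem_f2_mono h2a h2b hs1.le hc1.le hpa0 hqb.le hsinab hcosab hpbc hx0 hx1
        hu1a hu2a hu1b hu2b
    · -- a middle, b third
      have hQb0 : 0 ≤ x3*(Real.cos b + Real.cos γ1*(Real.cos b)^2 - Real.cos γ1*(Real.sin b)^2*(Real.cos γ1*Real.cos b + (Real.sin γ1)^2)) + Real.sin γ1*Real.cos b*(-Real.sin γ1 + (Real.cos γ1*Real.cos b + (Real.sin γ1)^2)*Real.sin b) :=
        le_of_not_gt (fun h => hB (hbr2b.mpr h))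
      unfold gGM
      rw [if_neg hnA, if_pos hA, if_neg hnB, if_neg hB]
      obtain ⟨c, hcmem, hFc⟩ := intermediate_value_Icc hab.le hFcont
        (Set.mem_Icc.mpr ⟨(hbr2a.mp hA).le, hQb0⟩)
      obtain ⟨hac, hcb⟩ := hcmem
      have hc0 : 0 ≤ c := le_trans ha0 hac
      obtain ⟨hpc0, hqc, hpcs, hpcc, hcqc, hsqc, hpqc⟩ :=
        lem_wfacts hγ0 hγlt hc0 (le_trans hcb hbγ) (le_trans hcb hbp)
      have h2c : Real.sin c ^ 2 + Real.cos c ^ 2 = 1 := Real.sin_sq_add_cos_sq c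
      have hD2c := lem_D2 h1 hs1 hc1.le hqc hpc0 hpcc hpqc
      have hQc0 : x3*(Real.cos c + Real.cos γ1*(Real.cos c)^2 - Real.cos γ1*(Real.sin c)^2*(Real.cos γ1*Real.cos c + (Real.sin γ1)^2)) + Real.sin γ1*Real.cos c*(-Real.sin γ1 + (Real.cos γ1*Real.cos c + (Real.sin γ1)^2)*Real.sin c) = 0 := hFc
      have hsin_ac : Real.sin a ≤ Real.sin c := by
        rw [← Real.cos_pi_div_two_sub, ← Real.cos_pi_div_two_sub]
        exact Real.cos_le_cos_of_nonneg_of_le_pi (by linarith) (by linarith) (by linarith)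
      have hsin_cb : Real.sin c ≤ Real.sin b := by
        rw [← Real.cos_pi_div_two_sub, ← Real.cos_pi_div_two_sub]
        exact Real.cos_le_cos_of_nonneg_of_le_pi (by linarith) (by linarith) (by linarith)
      have hcos_ca : Real.cos c ≤ Real.cos a :=
        Real.cos_le_cos_of_nonneg_of_le_pi ha0 (by linarith) hac
      have hcos_bc : Real.cos b ≤ Real.cos c :=
        Real.cos_le_cos_of_nonneg_of_le_pi hc0 (by linarith) hcb
      have hu1c : 0 < Real.cos c*Real.sin γ1 - x3*Real.cos γ1*Real.sin c + x3 :=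
        lem_ux1pos h2c hqc hs1 hc1.le hc1le1 hpc0 hx0
      have hu2c : 0 < Real.cos c*Real.sin γ1 - x3*Real.cos γ1*Real.sin c - x3 :=
        lem_uminus h1 hs1 hc1 hqc hpc0 hpcc hpqc hsqc (le_of_eq hQc0)
      have hdenc : (0:ℝ) < -2*(x3^2 - (Real.cos c*Real.sin γ1 - x3*Real.cos γ1*Real.sin c)^2) := lem_den hu1c hu2c
      have hE := lem_E3 h1 h2c (ne_of_gt hD2c) (ne_of_gt hqc) hQc0
      have heq : (1 - x3^2) * Real.sin γ1 * Real.cos c * (Real.cos c*Real.sin γ1 - x3*Real.cos γ1*Real.sin c) / (-2*(x3^2 - (Real.cos c*Real.sin γ1 - x3*Real.cos γ1*Real.sin c)^2))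
          = (1 + x3) * (1 + Real.cos (γ1 - c)) / 4 := by
        rw [Real.cos_sub, div_eq_div_iff (ne_of_gt hdenc) (by norm_num : (4:ℝ) ≠ 0)]
        linear_combination (-2*(1+x3)) * hE
      have step1 : (1 - x3^2) * Real.sin γ1 * Real.cos a * (Real.cos a*Real.sin γ1 - x3*Real.cos γ1*Real.sin a) / (-2*(x3^2 - (Real.cos a*Real.sin γ1 - x3*Real.cos γ1*Real.sin a)^2)) ≤ (1 - x3^2) * Real.sin γ1 * Real.cos c * (Real.cos c*Real.sin γ1 - x3*Real.cos γ1*Real.sin c) / (-2*(x3^2 - (Real.cos c*Real.sin γ1 - x3*Real.cos γ1*Real.sin c)^2)) :=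
        lem_f2_mono h2a h2c hs1.le hc1.le hpa0 hqc.le hsin_ac hcos_ca hpcc hx0 hx1
          hu1a hu2a hu1c hu2c
      have step2 : (1 + x3) * (1 + Real.cos (γ1 - c)) / 4
          ≤ (1 + x3) * (1 + Real.cos (γ1 - b)) / 4 :=
        lem_f3le (by linarith)
          (Real.cos_le_cos_of_nonneg_of_le_pi (by linarith) (by linarith) (by linarith))
      linarith only [step1, step2, heq.le, heq.ge]
  · have hQa0 : 0 ≤ x3*(Real.cos a + Real.cos γ1*(Real.cos a)^2 - Real.cos γ1*(Real.sin a)^2*(Real.cos γ1*Real.cos a + (Real.sin γ1)^2)) + Real.sin γ1*Real.cos a*(-Real.sin γ1 + (Real.cos γ1*Real.cos a + (Real.sin γ1)^2)*Real.sin a) :=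
      le_of_not_gt (fun h => hA (hbr2a.mpr h))
    by_cases hB : x3 < x34 γ1 b
    · -- a third, b middle
      have hu2b : 0 < Real.cos b*Real.sin γ1 - x3*Real.cos γ1*Real.sin b - x3 :=
        lem_uminus h1 hs1 hc1 hqb hpb0 hpbc hpqb hsqb (hbr2b.mp hB).le
      unfold gGM
      rw [if_neg hnA, if_neg hA, if_neg hnB, if_pos hB]
      obtain ⟨c, hcmem, hFc⟩ := intermediate_value_Icc' hab.le hFcont
        (Set.mem_Icc.mpr ⟨(hbr2b.mp hB).le, hQa0⟩)
      obtain ⟨hac, hcb⟩ := hcmem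
      have hc0 : 0 ≤ c := le_trans ha0 hac
      obtain ⟨hpc0, hqc, hpcs, hpcc, hcqc, hsqc, hpqc⟩ :=
        lem_wfacts hγ0 hγlt hc0 (le_trans hcb hbγ) (le_trans hcb hbp)
      have h2c : Real.sin c ^ 2 + Real.cos c ^ 2 = 1 := Real.sin_sq_add_cos_sq c
      have hD2c := lem_D2 h1 hs1 hc1.le hqc hpc0 hpcc hpqc
      have hQc0 : x3*(Real.cos c + Real.cos γ1*(Real.cos c)^2 - Real.cos γ1*(Real.sin c)^2*(Real.cos γ1*Real.cos c + (Real.sin γ1)^2)) + Real.sin γ1*Real.cos c*(-Real.sin γ1 + (Real.cos γ1*Real.cos c + (Real.sin γ1)^2)*Real.sin c) = 0 := hFc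
      have hsin_ac : Real.sin a ≤ Real.sin c := by
        rw [← Real.cos_pi_div_two_sub, ← Real.cos_pi_div_two_sub]
        exact Real.cos_le_cos_of_nonneg_of_le_pi (by linarith) (by linarith) (by linarith)
      have hsin_cb : Real.sin c ≤ Real.sin b := by
        rw [← Real.cos_pi_div_two_sub, ← Real.cos_pi_div_two_sub]
        exact Real.cos_le_cos_of_nonneg_of_le_pi (by linarith) (by linarith) (by linarith)
      have hcos_ca : Real.cos c ≤ Real.cos a :=
        Real.cos_le_cos_of_nonneg_of_le_pi ha0 (by linarith) hac
      have hcos_bc : Real.cos b ≤ Real.cos c :=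
        Real.cos_le_cos_of_nonneg_of_le_pi hc0 (by linarith) hcb
      have hu1c : 0 < Real.cos c*Real.sin γ1 - x3*Real.cos γ1*Real.sin c + x3 :=
        lem_ux1pos h2c hqc hs1 hc1.le hc1le1 hpc0 hx0
      have hu2c : 0 < Real.cos c*Real.sin γ1 - x3*Real.cos γ1*Real.sin c - x3 :=
        lem_uminus h1 hs1 hc1 hqc hpc0 hpcc hpqc hsqc (le_of_eq hQc0)
      have hdenc : (0:ℝ) < -2*(x3^2 - (Real.cos c*Real.sin γ1 - x3*Real.cos γ1*Real.sin c)^2) := lem_den hu1c hu2c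
      have hE := lem_E3 h1 h2c (ne_of_gt hD2c) (ne_of_gt hqc) hQc0
      have heq : (1 - x3^2) * Real.sin γ1 * Real.cos c * (Real.cos c*Real.sin γ1 - x3*Real.cos γ1*Real.sin c) / (-2*(x3^2 - (Real.cos c*Real.sin γ1 - x3*Real.cos γ1*Real.sin c)^2))
          = (1 + x3) * (1 + Real.cos (γ1 - c)) / 4 := by
        rw [Real.cos_sub, div_eq_div_iff (ne_of_gt hdenc) (by norm_num : (4:ℝ) ≠ 0)]
        linear_combination (-2*(1+x3)) * hE
      have step1 : (1 - x3^2) * Real.sin γ1 * Real.cos c * (Real.cos c*Real.sin γ1 - x3*Real.cos γ1*Real.sin c) / (-2*(x3^2 - (Real.cos c*Real.sin γ1 - x3*Real.cos γ1*Real.sin c)^2)) ≤ (1 - x3^2) * Real.sin γ1 * Real.cos b * (Real.cos b*Real.sin γ1 - x3*Real.cos γ1*Real.sin b) / (-2*(x3^2 - (Real.cos b*Real.sin γ1 - x3*Real.cos γ1*Real.sin b)^2)) :=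
        lem_f2_mono h2c h2b hs1.le hc1.le hpc0 hqb.le hsin_cb hcos_bc hpbc hx0 hx1
          hu1c hu2c hu1b hu2b
      have step2 : (1 + x3) * (1 + Real.cos (γ1 - a)) / 4
          ≤ (1 + x3) * (1 + Real.cos (γ1 - c)) / 4 :=
        lem_f3le (by linarith)
          (Real.cos_le_cos_of_nonneg_of_le_pi (by linarith) (by linarith) (by linarith))
      linarith only [step1, step2, heq.le, heq.ge]
    · -- both third
      unfold gGM
      rw [if_neg hnA, if_neg hA, if_neg hnB, if_neg hB]
      exact lem_f3le (by linarith)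
        (Real.cos_le_cos_of_nonneg_of_le_pi (by linarith) (by linarith) (by linarith))

theorem stmt19 (γ1 : ℝ) (hγ1 : γ1 ∈ Set.Icc (0:ℝ) (π/2)) (x3 : ℝ) :
    (x3 ∈ Set.Ioo (-1:ℝ) 0 →
      AntitoneOn (fun γ2 => gGM γ1 γ2 x3) (Set.Icc 0 (min γ1 (π/2 - γ1)))) ∧
    (x3 ∈ Set.Ioo (0:ℝ) 1 →
      MonotoneOn (fun γ2 => gGM γ1 γ2 x3) (Set.Icc 0 (min γ1 (π/2 - γ1)))) := by
  constructor
  · rintro ⟨hx1, hx0⟩ a ha b hb hab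
    exact main_neg hγ1.2 ha hb hab hx1 hx0
  · rintro ⟨hx0, hx1⟩ a ha b hb hab
    exact main_pos hγ1.2 ha hb hab hx0 hx1
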